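/- arXiv:1310.6721 — 3 statements merged into one kernel-verified Lean document; each statement's English description precedes it below -/
import Mathlib

section
/- Let p > 3 be a prime and let P, Q be elements of ℤ/pℤ with P·Q ≠ 0. Let n = (p − (p/3))/3, where (p/3) denotes the Legendre symbol of p modulo 3. If U_n(P,Q) = 0 in ℤ/pℤ, then U_{2⌊p/3⌋+1}(P,Q) = (−Q)^{⌊p/3⌋} in ℤ/pℤ. Moreover, if in addition P² − 3Q ≠ 0 in ℤ/pℤ, then conversely U_{2⌊p/3⌋+1}(P,Q) = (−Q)^{⌊p/3⌋} implies U_n(P,Q) = 0 in ℤ/pℤ. -/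
/-- The Lucas sequence `U_n(P, Q)` with `U_0 = 0`, `U_1 = 1`,
`U_{n+1} = P * U_n - Q * U_{n-1}`. -/
def lucasU {R : Type*} [CommRing R] (P Q : R) : ℕ → R
  | 0 => 0
  | 1 => 1
  | n + 2 => P * lucasU P Q (n + 1) - Q * lucasU P Q n

/-- The companion Lucas sequence `V_n(P, Q)`. -/
def lucasV {R : Type*} [CommRing R] (P Q : R) : ℕ → R
  | 0 => 2
  | 1 => P
  | n + 2 => P * lucasV P Q (n + 1) - Q * lucasV P Q n

section identities

variable {R : Type*} [CommRing R] (P Q : R)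

lemma idE : ∀ n : ℕ,
    lucasU P Q (n + 1) * lucasV P Q n - lucasU P Q n * lucasV P Q (n + 1) = 2 * Q ^ n
  | 0 => by simp [lucasU, lucasV]
  | n + 1 => by
    have h := idE n
    have eU : lucasU P Q (n + 2) = P * lucasU P Q (n + 1) - Q * lucasU P Q n := rfl
    have eV : lucasV P Q (n + 2) = P * lucasV P Q (n + 1) - Q * lucasV P Q n := rfl
    show lucasU P Q (n + 2) * lucasV P Q (n + 1) -
        lucasU P Q (n + 1) * lucasV P Q (n + 2) = 2 * Q ^ (n + 1)
    linear_combination Q * h + lucasV P Q (n + 1) * eU - lucasU P Q (n + 1) * eV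

lemma idG : ∀ n : ℕ,
    lucasU P Q (n + 1) * lucasV P Q (n + 1) - lucasU P Q n * lucasV P Q (n + 2) = P * Q ^ n
  | 0 => by simp [lucasU, lucasV]
  | n + 1 => by
    have h := idG n
    have eU : lucasU P Q (n + 2) = P * lucasU P Q (n + 1) - Q * lucasU P Q n := rfl
    have eV : lucasV P Q (n + 3) = P * lucasV P Q (n + 2) - Q * lucasV P Q (n + 1) := rfl
    show lucasU P Q (n + 2) * lucasV P Q (n + 2) -
        lucasU P Q (n + 1) * lucasV P Q (n + 3) = P * Q ^ (n + 1)
    linear_combination Q * h + lucasV P Q (n + 2) * eU - lucasU P Q (n + 1) * eV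

lemma idAC : ∀ n : ℕ,
    lucasU P Q (2 * n + 1) = Q ^ n + lucasU P Q n * lucasV P Q (n + 1) ∧
      lucasU P Q (2 * n + 2) = lucasU P Q (n + 1) * lucasV P Q (n + 1)
  | 0 => by simp [lucasU, lucasV]
  | n + 1 => by
    obtain ⟨hA, hC⟩ := idAC n
    have hE := idE P Q (n + 1)
    have hG := idG P Q (n + 1)
    have eU : lucasU P Q (n + 2) = P * lucasU P Q (n + 1) - Q * lucasU P Q n := rfl
    have eV : lucasV P Q (n + 3) = P * lucasV P Q (n + 2) - Q * lucasV P Q (n + 1) := rfl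
    have eU1 : lucasU P Q (2 * n + 3)
        = P * lucasU P Q (2 * n + 2) - Q * lucasU P Q (2 * n + 1) := rfl
    have eU2 : lucasU P Q (2 * n + 4)
        = P * lucasU P Q (2 * n + 3) - Q * lucasU P Q (2 * n + 2) := rfl
    have hA1 : lucasU P Q (2 * n + 3)
        = Q ^ (n + 1) + lucasU P Q (n + 1) * lucasV P Q (n + 2) := by
      linear_combination eU1 + P * hC - Q * hA + hE - lucasV P Q (n + 1) * eU
    constructor
    · show lucasU P Q (2 * n + 3) = Q ^ (n + 1) + lucasU P Q (n + 1) * lucasV P Q (n + 2)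
      exact hA1
    · show lucasU P Q (2 * n + 4) = lucasU P Q (n + 2) * lucasV P Q (n + 2)
      linear_combination eU2 + P * hA1 - Q * hC - hG - lucasU P Q (n + 1) * eV

lemma idA (n : ℕ) :
    lucasU P Q (2 * n + 1) = Q ^ n + lucasU P Q n * lucasV P Q (n + 1) :=
  (idAC P Q n).1

lemma idF (n : ℕ) :
    lucasU P Q (2 * n + 1) + Q ^ n = lucasU P Q (n + 1) * lucasV P Q n := by
  linear_combination idA P Q n - idE P Q n

lemma lucasV_image {S : Type*} [CommRing S] (φ : R →+* S) (a b : S)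
    (hs : a + b = φ P) (hm : a * b = φ Q) :
    ∀ n : ℕ, φ (lucasV P Q n) = a ^ n + b ^ n
  | 0 => by norm_num [lucasV, map_ofNat]
  | 1 => by simpa [lucasV] using hs.symm
  | n + 2 => by
    have h1 := lucasV_image φ a b hs hm (n + 1)
    have h0 := lucasV_image φ a b hs hm n
    have eV : lucasV P Q (n + 2) = P * lucasV P Q (n + 1) - Q * lucasV P Q n := rfl
    rw [eV, map_sub, map_mul, map_mul, h1, h0]
    linear_combination (a ^ (n + 1) + b ^ (n + 1)) * hs.symm + (a ^ n + b ^ n) * hm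

/-- The key purely algebraic lemma. -/
lemma key_ring {S : Type*} [CommRing S] (s q a b g d : S)
    (h1 : a + b = s) (h2 : a * b = q) (h3 : g + d = s) (h4 : g * d = q)
    (h5 : g * a ^ 2 = -(d * b ^ 2)) :
    s * (q * (s ^ 2 - 3 * q)) = 0 := by
  have E1 : s * a ^ 2 = s * (d * (a - b)) := by
    linear_combination h5 - a ^ 2 * h3 + d * (a - b) * h1
  have E2 : s * b ^ 2 = -(s * (g * (a - b))) := by
    linear_combination h5 - b ^ 2 * h3 - g * (a - b) * h1
  linear_combination b ^ 2 * E1 + d * (a - b) * E2 + (4 * s * q - s * (a * b + q)) * h2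
    - s * (a - b) ^ 2 * h4 - s * q * (a + b + s) * h1

end identities

lemma vanish_contra (p : ℕ) [Fact p.Prime] (hp : 3 < p) (P Q : ZMod p)
    (hP : P ≠ 0) (hQ : Q ≠ 0) (h3 : P ^ 2 - 3 * Q ≠ 0) (j : ℕ)
    (hj : 3 * j = p + 2 ∨ 3 * j = p - 2) (hV : lucasV P Q j = 0) : False := by
  classical
  have hroot := AdjoinRoot.eval₂_root
    (Polynomial.C (1 : ZMod p) * Polynomial.X ^ 2 + Polynomial.C (-P) * Polynomial.X
      + Polynomial.C Q)
  have hdeg : (Polynomial.C (1 : ZMod p) * Polynomial.X ^ 2 + Polynomial.C (-P) * Polynomial.X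
      + Polynomial.C Q).degree ≠ 0 := by
    rw [Polynomial.degree_quadratic one_ne_zero]
    decide
  simp only [Polynomial.eval₂_add, Polynomial.eval₂_mul, Polynomial.eval₂_C,
    Polynomial.eval₂_X, Polynomial.eval₂_pow, Polynomial.eval₂_one, Polynomial.eval₂_neg, map_one, map_neg,
    one_mul] at hroot
  set φ := AdjoinRoot.of (Polynomial.C (1 : ZMod p) * Polynomial.X ^ 2
      + Polynomial.C (-P) * Polynomial.X + Polynomial.C Q) with hφ
  set α := AdjoinRoot.root (Polynomial.C (1 : ZMod p) * Polynomial.X ^ 2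
      + Polynomial.C (-P) * Polynomial.X + Polynomial.C Q) with hα
  have hinj : Function.Injective φ := AdjoinRoot.of.injective_of_degree_ne_zero hdeg
  haveI : CharP (AdjoinRoot (Polynomial.C (1 : ZMod p) * Polynomial.X ^ 2
      + Polynomial.C (-P) * Polynomial.X + Polynomial.C Q)) p :=
    charP_of_injective_ringHom hinj p
  set β := φ P - α with hβ
  have hsum : α + β = φ P := by rw [hβ]; ring
  have hmul : α * β = φ Q := by rw [hβ]; linear_combination -hroot
  have hfs : α ^ p + β ^ p = φ P := by
    rw [← add_pow_char, hsum, ← map_pow, ZMod.pow_card]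
  have hfm : α ^ p * β ^ p = φ Q := by
    rw [← mul_pow, hmul, ← map_pow, ZMod.pow_card]
  have hVj : α ^ j + β ^ j = 0 := by
    rw [← lucasV_image P Q φ α β hsum hmul j, hV, map_zero]
  have hcube : α ^ (3 * j) = -β ^ (3 * j) := by
    rw [mul_comm 3 j, pow_mul, pow_mul]
    linear_combination (α ^ (2 * j) - α ^ j * β ^ j + β ^ (2 * j)) * hVj
  have hzero : φ P * (φ Q * ((φ P) ^ 2 - 3 * φ Q)) = 0 := by
    rcases hj with hj | hj
    · rw [hj, pow_add, pow_add] at hcube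
      exact key_ring (φ P) (φ Q) α β (α ^ p) (β ^ p) hsum hmul hfs hfm
        (by linear_combination hcube)
    · have hpj : p = 3 * j + 2 := by omega
      have e1 : α ^ p = α ^ (3 * j) * α ^ 2 := by
        rw [← pow_add]; congr 1
      have e2 : β ^ p = β ^ (3 * j) * β ^ 2 := by
        rw [← pow_add]; congr 1
      have h5 : α ^ p * β ^ 2 = -(β ^ p * α ^ 2) := by
        rw [e1, e2]
        linear_combination (α ^ 2 * β ^ 2) * hcube
      exact key_ring (φ P) (φ Q) β α (α ^ p) (β ^ p) (by linear_combination hsum)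
        (by linear_combination hmul) hfs hfm h5
  have hfin : P * (Q * (P ^ 2 - 3 * Q)) = 0 := by
    apply hinj
    rw [map_zero, map_mul, map_mul, map_sub, map_pow, map_mul, map_ofNat]
    exact hzero
  exact (mul_ne_zero hP (mul_ne_zero hQ h3)) hfin

theorem stmt_0 (p : ℕ) [Fact p.Prime] (hp : 3 < p) (P Q : ZMod p)
    (hPQ : P * Q ≠ 0) :
    (lucasU P Q (if p % 3 = 1 then (p - 1) / 3 else (p + 1) / 3) = 0 →
      lucasU P Q (2 * (p / 3) + 1) = (-Q) ^ (p / 3)) ∧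
    (P ^ 2 - 3 * Q ≠ 0 →
      lucasU P Q (2 * (p / 3) + 1) = (-Q) ^ (p / 3) →
      lucasU P Q (if p % 3 = 1 then (p - 1) / 3 else (p + 1) / 3) = 0) := by
  have hprime : p.Prime := Fact.out
  have hP : P ≠ 0 := left_ne_zero_of_mul hPQ
  have hQ : Q ≠ 0 := right_ne_zero_of_mul hPQ
  have hodd : p % 2 = 1 := Nat.odd_iff.mp (hprime.odd_of_ne_two (by omega))
  have hmod3 : p % 3 = 1 ∨ p % 3 = 2 := by
    have h30 : p % 3 ≠ 0 := by
      intro h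
      rcases (hprime.eq_one_or_self_of_dvd 3 (Nat.dvd_of_mod_eq_zero h)) with h' | h' <;> omega
    omega
  set k := p / 3 with hk
  rcases hmod3 with h3 | h3
  · -- p = 3k+1, n = k, k even
    have hpk : p = 3 * k + 1 := by omega
    have hidx : (p - 1) / 3 = k := by omega
    have hneg : (-Q) ^ k = Q ^ k := Even.neg_pow (Nat.even_iff.mpr (by omega)) Q
    have hA := idA P Q k
    rw [if_pos h3, hidx]
    constructor
    · intro h
      rw [hA, h, hneg]
      ring
    · intro hPQ3 hU
      have h0 : lucasU P Q k * lucasV P Q (k + 1) = 0 := by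
        linear_combination hU - hA + hneg
      rcases mul_eq_zero.mp h0 with h | h
      · exact h
      · exact absurd h
          (fun h => vanish_contra p hp P Q hP hQ hPQ3 (k + 1) (Or.inl (by omega)) h)
  · -- p = 3k+2, n = k+1, k odd
    have hpk : p = 3 * k + 2 := by omega
    have hidx : (p + 1) / 3 = k + 1 := by omega
    have hneg : (-Q) ^ k = -Q ^ k := Odd.neg_pow (Nat.odd_iff.mpr (by omega)) Q
    have hF := idF P Q k
    rw [if_neg (by omega), hidx]
    constructor
    · intro h
      rw [hneg]
      linear_combination hF + lucasV P Q k * h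
    · intro hPQ3 hU
      have h0 : lucasU P Q (k + 1) * lucasV P Q k = 0 := by
        linear_combination hU + hneg - hF
      rcases mul_eq_zero.mp h0 with h | h
      · exact h
      · exact absurd h
          (fun h => vanish_contra p hp P Q hP hQ hPQ3 k (Or.inr (by omega)) h)
end

section
/- Let p > 3 be a prime. Then, in ℤ/pℤ: (1) if p ≠ 11, Σ_{k=1}^{⌊p/3⌋} C(3k,k)·36^k = (6/11)·(χ_p(−2) − 1); (2) if p ≠ 13, Σ_{k=1}^{⌊p/3⌋} C(3k,k)·(−100)^k = (6/13)·((−1)^{(p−1)/2} − 1); (3) Σ_{k=1}^{⌊p/3⌋} C(3k,k)·(1/8)^k = (3/2)·(χ_p(5) − 1); (4) if p ≠ 7, Σ_{k=1}^{⌊p/3⌋} C(3k,k)·(3/8)^k = (9/14)·(χ_p(−3) − 1). -/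
open Finset

private def bb {R : Type*} [CommRing R] (y : R) (N : ℕ) : R :=
  ∑ k ∈ Finset.range (N + 1), ((N - 2 * k).choose k : R) * y ^ k

private lemma bb0 {R : Type*} [CommRing R] (y : R) : bb y 0 = 1 := by
  simp [bb]

private lemma bb1 {R : Type*} [CommRing R] (y : R) : bb y 1 = 1 := by
  simp [bb, Finset.sum_range_succ]

private lemma bb2 {R : Type*} [CommRing R] (y : R) : bb y 2 = 1 := by
  simp [bb, Finset.sum_range_succ]

private lemma bb_rec {R : Type*} [CommRing R] (y : R) (N : ℕ) :
    bb y (N + 3) = bb y (N + 2) + y * bb y N := by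
  have pascal : ∀ k : ℕ, ((N + 3) - 2 * (k + 1)).choose (k + 1)
      = (N - 2 * k).choose k + (N - 2 * k).choose (k + 1) := by
    intro k
    rcases le_or_gt (2 * k) N with h | h
    · have h1 : (N + 3) - 2 * (k + 1) = (N - 2 * k) + 1 := by omega
      rw [h1, Nat.choose_succ_succ]
    · have h1 : (N + 3) - 2 * (k + 1) < k + 1 := by omega
      have h2 : N - 2 * k < k := by omega
      rw [Nat.choose_eq_zero_of_lt h1, Nat.choose_eq_zero_of_lt h2,
        Nat.choose_eq_zero_of_lt (lt_of_lt_of_le h2 (Nat.le_succ k))]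
  have lhs1 : bb y (N + 3)
      = (∑ k ∈ Finset.range (N + 3), ((N + 3 - 2 * (k + 1)).choose (k + 1) : R) * y ^ (k + 1)) + 1 := by
    unfold bb
    rw [Finset.sum_range_succ']
    simp
  rw [lhs1]
  have split : ∀ k ∈ Finset.range (N + 3),
      ((N + 3 - 2 * (k + 1)).choose (k + 1) : R) * y ^ (k + 1)
      = ((N - 2 * k).choose (k + 1) : R) * y ^ (k + 1)
        + y * (((N - 2 * k).choose k : R) * y ^ k) := by
    intro k _
    rw [pascal k]
    push_cast
    ring
  rw [Finset.sum_congr rfl split, Finset.sum_add_distrib, ← Finset.mul_sum]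
  have e2 : (∑ k ∈ Finset.range (N + 3), ((N - 2 * k).choose (k + 1) : R) * y ^ (k + 1)) + 1
      = bb y (N + 2) := by
    rw [Finset.sum_range_succ]
    have z : (N - 2 * (N + 2)).choose (N + 2 + 1) = 0 := Nat.choose_eq_zero_of_lt (by omega)
    rw [z]
    unfold bb
    conv_rhs => rw [Finset.sum_range_succ']
    have h4 : ∀ k ∈ Finset.range (N + 2),
        ((N + 2 - 2 * (k + 1)).choose (k + 1) : R) * y ^ (k + 1)
        = ((N - 2 * k).choose (k + 1) : R) * y ^ (k + 1) := by
      intro k _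
      have h : N + 2 - 2 * (k + 1) = N - 2 * k := by omega
      rw [h]
    rw [Finset.sum_congr rfl h4]
    simp
  have e3 : (∑ k ∈ Finset.range (N + 3), ((N - 2 * k).choose k : R) * y ^ k) = bb y N := by
    unfold bb
    rw [Finset.sum_range_succ, Finset.sum_range_succ]
    have z1 : (N - 2 * (N + 2)).choose (N + 2) = 0 := Nat.choose_eq_zero_of_lt (by omega)
    have z2 : (N - 2 * (N + 1)).choose (N + 1) = 0 := Nat.choose_eq_zero_of_lt (by omega)
    rw [z1, z2]
    push_cast
    ring
  rw [← e2, ← e3]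
  ring

private lemma map_bb {R S : Type*} [CommRing R] [CommRing S] (ψ : R →+* S) (y : R) (N : ℕ) :
    ψ (bb y N) = bb (ψ y) N := by
  simp [bb, map_sum]

private lemma closed_form {K : Type*} [Field K] (y a r r' : K)
    (h1 : a + r + r' = 1) (h2 : a * r + a * r' + r * r' = 0) (h3 : a * r * r' = y)
    (d1 : a - r ≠ 0) (d2 : a - r' ≠ 0) (d3 : r - r' ≠ 0) (N : ℕ) :
    bb y N = a ^ (N + 2) / ((a - r) * (a - r')) + r ^ (N + 2) / ((r - a) * (r - r'))
      + r' ^ (N + 2) / ((r' - a) * (r' - r)) := by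
  have da : r - a ≠ 0 := fun h => d1 (by linear_combination -h)
  have db : r' - a ≠ 0 := fun h => d2 (by linear_combination -h)
  have dc : r' - r ≠ 0 := fun h => d3 (by linear_combination -h)
  have ha : a ^ 3 = a ^ 2 + y := by linear_combination a ^ 2 * h1 - a * h2 + h3
  have hr : r ^ 3 = r ^ 2 + y := by linear_combination r ^ 2 * h1 - r * h2 + h3
  have hr' : r' ^ 3 = r' ^ 2 + y := by linear_combination r' ^ 2 * h1 - r' * h2 + h3
  induction N using Nat.strong_induction_on with
  | _ N ih =>
    rcases N with _ | _ | _ | M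
    · rw [bb0]
      field_simp
      ring
    · rw [bb1]
      have base : a ^ (1 + 2) / ((a - r) * (a - r')) + r ^ (1 + 2) / ((r - a) * (r - r'))
          + r' ^ (1 + 2) / ((r' - a) * (r' - r)) = a + r + r' := by
        field_simp
        ring
      rw [base, h1]
    · rw [bb2]
      have base : a ^ (2 + 2) / ((a - r) * (a - r')) + r ^ (2 + 2) / ((r - a) * (r - r'))
          + r' ^ (2 + 2) / ((r' - a) * (r' - r))
          = (a + r + r') ^ 2 - (a * r + a * r' + r * r') := by
        field_simp
        ring
      rw [base, h1, h2]
      norm_num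
    · rw [bb_rec, ih (M + 2) (by omega), ih M (by omega)]
      have ea : a ^ (M + 3 + 2) = a ^ (M + 2 + 2) + y * a ^ (M + 2) := by
        have : a ^ (M + 3 + 2) = a ^ 3 * a ^ (M + 2) := by ring
        rw [this, ha]; ring
      have er : r ^ (M + 3 + 2) = r ^ (M + 2 + 2) + y * r ^ (M + 2) := by
        have : r ^ (M + 3 + 2) = r ^ 3 * r ^ (M + 2) := by ring
        rw [this, hr]; ring
      have er' : r' ^ (M + 3 + 2) = r' ^ (M + 2 + 2) + y * r' ^ (M + 2) := by
        have : r' ^ (M + 3 + 2) = r' ^ 3 * r' ^ (M + 2) := by ring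
        rw [this, hr']; ring
      rw [ea, er, er']
      field_simp
      ring

private lemma key_termwise (p : ℕ) [Fact p.Prime] (k : ℕ) (h3 : 3 * k ≤ p - 1) :
    ((3 * k).choose k : ZMod p) = (-1) ^ k * ((p - 1 - 2 * k).choose k : ZMod p) := by
  have hp2 : 2 ≤ p := (Fact.out : p.Prime).two_le
  have hkp : k < p := by omega
  have hfac : ((Nat.factorial k : ℕ) : ZMod p) ≠ 0 := by
    rw [Ne, ZMod.natCast_eq_zero_iff]
    intro hdvd
    exact absurd ((Nat.Prime.dvd_factorial (Fact.out : p.Prime)).mp hdvd) (by omega)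
  apply mul_right_cancel₀ hfac
  have e1 : ((3 * k).choose k : ZMod p) * ((Nat.factorial k : ℕ) : ZMod p) = (((3 * k).descFactorial k : ℕ) : ZMod p) := by
    rw [Nat.descFactorial_eq_factorial_mul_choose]
    push_cast
    ring
  have e2 : ((p - 1 - 2 * k).choose k : ZMod p) * ((Nat.factorial k : ℕ) : ZMod p)
      = (((p - 1 - 2 * k).descFactorial k : ℕ) : ZMod p) := by
    rw [Nat.descFactorial_eq_factorial_mul_choose]
    push_cast
    ring
  rw [e1, mul_assoc, e2]
  rw [Nat.descFactorial_eq_prod_range, Nat.descFactorial_eq_prod_range]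
  push_cast [Nat.cast_prod]
  have c1 : ∀ i ∈ Finset.range k, ((3 * k - i : ℕ) : ZMod p) = 3 * (k : ZMod p) - i := by
    intro i hi
    have hik : i < k := Finset.mem_range.mp hi
    rw [Nat.cast_sub (by omega)]
    push_cast
    ring
  have c2 : ∀ i ∈ Finset.range k, ((p - 1 - 2 * k - i : ℕ) : ZMod p)
      = -(2 * (k : ZMod p) + 1 + i) := by
    intro i hi
    have hik : i < k := Finset.mem_range.mp hi
    have hh : p - 1 - 2 * k - i = p - (2 * k + 1 + i) := by omega
    rw [hh, Nat.cast_sub (by omega)]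
    push_cast [ZMod.natCast_self]
    ring
  rw [Finset.prod_congr rfl c1, Finset.prod_congr rfl c2]
  have c3 : ∀ i ∈ Finset.range k, (-(2 * (k : ZMod p) + 1 + i)) = (-1) * (2 * (k : ZMod p) + 1 + i) := by
    intro i _; ring
  rw [Finset.prod_congr rfl c3, Finset.prod_mul_distrib, Finset.prod_const]
  have c4 : (∏ i ∈ Finset.range k, (3 * (k : ZMod p) - (i : ZMod p)))
      = ∏ i ∈ Finset.range k, (2 * (k : ZMod p) + 1 + i) := by
    rw [← Finset.prod_range_reflect (fun i => 2 * (k : ZMod p) + 1 + (i : ZMod p)) k]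
    apply Finset.prod_congr rfl
    intro j hj
    have hjk : j < k := Finset.mem_range.mp hj
    have : ((k - 1 - j : ℕ) : ZMod p) = (k : ZMod p) - 1 - j := by
      rw [Nat.cast_sub (by omega), Nat.cast_sub (by omega)]
      push_cast
      ring
    rw [this]
    push_cast
    ring
  rw [c4, Finset.card_range]
  have c5 : ((-1 : ZMod p)) ^ k * (-1) ^ k = 1 := by
    rw [← pow_add, ← two_mul, pow_mul]
    norm_num
  calc (∏ i ∈ Finset.range k, (2 * (k : ZMod p) + 1 + i))
      = (∏ i ∈ Finset.range k, (2 * (k : ZMod p) + 1 + i)) * ((-1) ^ k * (-1) ^ k) := by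
        rw [c5, mul_one]
    _ = (-1) ^ k * ((-1) ^ k * ∏ i ∈ Finset.range k, (2 * (k : ZMod p) + 1 + i)) := by ring

private lemma sum_eq_bb (p : ℕ) [Fact p.Prime] (hp : 3 < p) (x : ZMod p) :
    ∑ k ∈ Finset.Icc 1 (p / 3), ((3 * k).choose k : ZMod p) * x ^ k = bb (-x) (p - 1) - 1 := by
  have hp2 : 2 ≤ p := (Fact.out : p.Prime).two_le
  have h3p : ¬ 3 ∣ p := by
    intro h
    rcases (Nat.Prime.eq_one_or_self_of_dvd (Fact.out : p.Prime) 3 h) with h' | h' <;> omega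
  have hdm := Nat.div_add_mod p 3
  have hmod : p % 3 ≠ 0 := fun h => h3p (Nat.dvd_of_mod_eq_zero h)
  have hmod3 : p % 3 < 3 := Nat.mod_lt _ (by norm_num)
  have hn3 : 3 * (p / 3) ≤ p - 1 := by omega
  have e0 : bb (-x) (p - 1)
      = ∑ k ∈ Finset.range p, ((p - 1 - 2 * k).choose k : ZMod p) * (-x) ^ k := by
    unfold bb
    rw [Nat.sub_add_cancel (by omega : 1 ≤ p)]
  have e1 : Finset.range p = insert 0 (Finset.Icc 1 (p - 1)) := by
    ext m
    simp only [Finset.mem_range, Finset.mem_insert, Finset.mem_Icc]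
    omega
  rw [e0, e1, Finset.sum_insert (by simp)]
  have e2 : ((p - 1 - 2 * 0).choose 0 : ZMod p) * (-x) ^ 0 = 1 := by simp
  rw [e2]
  have e3 : ∑ k ∈ Finset.Icc 1 (p - 1), ((p - 1 - 2 * k).choose k : ZMod p) * (-x) ^ k
      = ∑ k ∈ Finset.Icc 1 (p / 3), ((p - 1 - 2 * k).choose k : ZMod p) * (-x) ^ k := by
    refine (Finset.sum_subset (Finset.Icc_subset_Icc le_rfl (by omega)) ?_).symm
    intro m hm hm'
    simp only [Finset.mem_Icc] at hm hm'
    have : p - 1 - 2 * m < m := by omega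
    rw [Nat.choose_eq_zero_of_lt this]
    simp
  rw [e3]
  have e4 : ∀ k ∈ Finset.Icc 1 (p / 3),
      ((p - 1 - 2 * k).choose k : ZMod p) * (-x) ^ k = ((3 * k).choose k : ZMod p) * x ^ k := by
    intro k hk
    simp only [Finset.mem_Icc] at hk
    rw [key_termwise p k (by omega), neg_pow]
    ring
  rw [Finset.sum_congr rfl e4]
  ring

private lemma zmodTwoNeZero (p : ℕ) [Fact p.Prime] (hp : 3 < p) : (2 : ZMod p) ≠ 0 := by
  rw [show (2 : ZMod p) = ((2 : ℕ) : ZMod p) by norm_num, Ne,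
    ZMod.natCast_eq_zero_iff]
  intro h
  have := Nat.le_of_dvd (by norm_num) h
  omega

private lemma master_sq (p : ℕ) [Fact p.Prime] (hp : 3 < p) (a : ZMod p)
    (ha0 : a ≠ 0) (ha1 : a - 1 ≠ 0) (hq : 3 * a ^ 2 - 2 * a ≠ 0)
    (hd0 : -3 * a ^ 2 + 2 * a + 1 ≠ 0) (hd : IsSquare (-3 * a ^ 2 + 2 * a + 1)) :
    ∑ k ∈ Finset.Icc 1 (p / 3), ((3 * k).choose k : ZMod p) * (a ^ 2 - a ^ 3) ^ k = 0 := by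
  have hp2 : 2 ≤ p := (Fact.out : p.Prime).two_le
  have h2ne : (2 : ZMod p) ≠ 0 := zmodTwoNeZero p hp
  set i : ZMod p := (2 : ZMod p)⁻¹ with hidef
  have hi : 2 * i = 1 := mul_inv_cancel₀ h2ne
  obtain ⟨s, hs⟩ := hd
  have hs' : s ^ 2 = -3 * a ^ 2 + 2 * a + 1 := by rw [sq]; exact hs.symm
  have hsne : s ≠ 0 := fun h => hd0 (by rw [h] at hs'; linear_combination -hs')
  have h1 : a + (1 - a + s) * i + (1 - a - s) * i = 1 := by
    linear_combination (1 - a) * hi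
  have h2 : a * ((1 - a + s) * i) + a * ((1 - a - s) * i) + ((1 - a + s) * i) * ((1 - a - s) * i) = 0 := by
    linear_combination (-2 * a * (1 - a) * i) * hi + (-i ^ 2) * hs'
  have h3 : a * ((1 - a + s) * i) * ((1 - a - s) * i) = a ^ 3 - a ^ 2 := by
    linear_combination (-a ^ 2 * (1 - a) * (1 + 2 * i)) * hi + (-a * i ^ 2) * hs'
  have hrr' : ((1 - a + s) * i) * ((1 - a - s) * i) = a ^ 2 - a := by
    linear_combination (-a * (1 - a) * (1 + 2 * i)) * hi + (-i ^ 2) * hs'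
  have hDa : (a - (1 - a + s) * i) * (a - (1 - a - s) * i) = 3 * a ^ 2 - 2 * a := by
    linear_combination (-2 * a * (1 - a) * (1 + i)) * hi + (-i ^ 2) * hs'
  have d3 : (1 - a + s) * i - (1 - a - s) * i ≠ 0 := by
    intro h
    exact hsne (by linear_combination h - s * hi)
  have d1 : a - (1 - a + s) * i ≠ 0 := by
    intro h
    rw [h, zero_mul] at hDa
    exact hq hDa.symm
  have d2 : a - (1 - a - s) * i ≠ 0 := by
    intro h
    rw [h, mul_zero] at hDa
    exact hq hDa.symm
  have haa1 : a ^ 2 - a ≠ 0 := by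
    intro h
    have : a * (a - 1) = 0 := by linear_combination h
    rcases mul_eq_zero.mp this with h' | h'
    · exact ha0 h'
    · exact ha1 h'
  have hrne : (1 - a + s) * i ≠ 0 := by
    intro h
    rw [h, zero_mul] at hrr'
    exact haa1 hrr'.symm
  have hr'ne : (1 - a - s) * i ≠ 0 := by
    intro h
    rw [h, mul_zero] at hrr'
    exact haa1 hrr'.symm
  rw [sum_eq_bb p hp]
  have hy : (-(a ^ 2 - a ^ 3)) = a ^ 3 - a ^ 2 := by ring
  rw [hy]
  rw [closed_form (a ^ 3 - a ^ 2) a ((1 - a + s) * i) ((1 - a - s) * i) h1 h2 h3 d1 d2 d3 (p - 1)]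
  have pe : ∀ t : ZMod p, t ≠ 0 → t ^ (p - 1 + 2) = t ^ 2 := by
    intro t ht
    rw [pow_add, ZMod.pow_card_sub_one_eq_one ht, one_mul]
  rw [pe a ha0, pe _ hrne, pe _ hr'ne]
  have aux : ∀ u v w : ZMod p, u - v ≠ 0 → u - w ≠ 0 → v - w ≠ 0 →
      u ^ 2 / ((u - v) * (u - w)) + v ^ 2 / ((v - u) * (v - w))
        + w ^ 2 / ((w - u) * (w - v)) = 1 := by
    intro u v w e1 e2 e3
    have e4 : v - u ≠ 0 := fun h => e1 (by linear_combination -h)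
    have e5 : w - u ≠ 0 := fun h => e2 (by linear_combination -h)
    have e6 : w - v ≠ 0 := fun h => e3 (by linear_combination -h)
    field_simp
    ring
  rw [aux a _ _ d1 d2 d3]
  ring

set_option maxHeartbeats 1600000 in
open Polynomial in
private lemma master_nonsq (p : ℕ) [Fact p.Prime] (hp : 3 < p) (a : ZMod p)
    (ha0 : a ≠ 0) (ha1 : a - 1 ≠ 0) (hq : 3 * a ^ 2 - 2 * a ≠ 0)
    (hd : ¬ IsSquare (-3 * a ^ 2 + 2 * a + 1)) :
    ∑ k ∈ Finset.Icc 1 (p / 3), ((3 * k).choose k : ZMod p) * (a ^ 2 - a ^ 3) ^ k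
      = -(3 * a ^ 2 - 3 * a) / (3 * a ^ 2 - 2 * a) := by
  have hp2 : 2 ≤ p := (Fact.out : p.Prime).two_le
  have hodd : p % 2 = 1 := Nat.odd_iff.mp (Nat.Prime.odd_of_ne_two Fact.out (by omega))
  have h2ne : (2 : ZMod p) ≠ 0 := zmodTwoNeZero p hp
  have hd0 : -3 * a ^ 2 + 2 * a + 1 ≠ 0 := by
    intro h
    exact hd ⟨0, by rw [h]; ring⟩
  -- Euler criterion : d ^ (p/2) = -1
  have hE : (-3 * a ^ 2 + 2 * a + 1) ^ (p / 2) = -1 := by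
    have hne1 : (-3 * a ^ 2 + 2 * a + 1) ^ (p / 2) ≠ 1 :=
      fun h => hd ((ZMod.euler_criterion p hd0).mpr h)
    have hsq : (-3 * a ^ 2 + 2 * a + 1) ^ (p / 2) * (-3 * a ^ 2 + 2 * a + 1) ^ (p / 2) = 1 := by
      rw [← pow_add, show p / 2 + p / 2 = p - 1 by omega]
      exact ZMod.pow_card_sub_one_eq_one hd0
    rcases mul_self_eq_one_iff.mp hsq with h | h
    · exact absurd h hne1
    · exact h
  have haa1 : a ^ 2 - a ≠ 0 := by
    intro h
    have : a * (a - 1) = 0 := by linear_combination h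
    rcases mul_eq_zero.mp this with h' | h'
    · exact ha0 h'
    · exact ha1 h'
  -- the quadratic extension
  have hirr : Irreducible (X ^ 2 - C (-3 * a ^ 2 + 2 * a + 1)) :=
    X_pow_sub_C_irreducible_of_prime Nat.prime_two
      (fun b hb => hd ⟨b, by rw [← hb]; ring⟩)
  haveI : Fact (Irreducible (X ^ 2 - C (-3 * a ^ 2 + 2 * a + 1))) := ⟨hirr⟩
  set ψ : ZMod p →+* AdjoinRoot (X ^ 2 - C (-3 * a ^ 2 + 2 * a + 1)) :=
    (algebraMap (ZMod p) (AdjoinRoot (X ^ 2 - C (-3 * a ^ 2 + 2 * a + 1)))) with hψdef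
  have hinj : Function.Injective ψ := ψ.injective
  haveI : CharP (AdjoinRoot (X ^ 2 - C (-3 * a ^ 2 + 2 * a + 1))) p :=
    charP_of_injective_ringHom hinj p
  set s : AdjoinRoot (X ^ 2 - C (-3 * a ^ 2 + 2 * a + 1)) := AdjoinRoot.root _ with hsdef
  have hs2 : s ^ 2 = ψ (-3 * a ^ 2 + 2 * a + 1) := by
    have h0 := AdjoinRoot.eval₂_root (X ^ 2 - C (-3 * a ^ 2 + 2 * a + 1))
    rw [eval₂_sub, eval₂_pow, eval₂_X, eval₂_C, sub_eq_zero] at h0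
    rw [hsdef, hψdef, AdjoinRoot.algebraMap_eq]
    exact h0
  set A : AdjoinRoot (X ^ 2 - C (-3 * a ^ 2 + 2 * a + 1)) := ψ a with hAdef
  have hsA : s ^ 2 = -3 * A ^ 2 + 2 * A + 1 := by
    rw [hs2]
    push_cast [map_add, map_mul, map_neg, map_pow, map_one, map_ofNat]
    ring
  have hsne : s ≠ 0 := by
    intro h
    rw [h] at hsA
    apply hd0
    apply hinj
    rw [map_zero]
    have : ψ (-3 * a ^ 2 + 2 * a + 1) = -3 * A ^ 2 + 2 * A + 1 := by
      push_cast [map_add, map_mul, map_neg, map_pow, map_one, map_ofNat]; ring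
    rw [this]
    linear_combination -hsA
  set i : ZMod p := (2 : ZMod p)⁻¹ with hidef
  have hi : 2 * i = 1 := mul_inv_cancel₀ h2ne
  have hiK : 2 * ψ i = 1 := by
    rw [show (2 : AdjoinRoot (X ^ 2 - C (-3 * a ^ 2 + 2 * a + 1))) = ψ 2 by push_cast [map_ofNat]; ring,
      ← map_mul, hi, map_one]
  -- nonzero lemmas
  have hA0 : A ≠ 0 := fun h => ha0 (hinj (by rw [map_zero]; exact h))
  have hψne : ∀ t : ZMod p, t ≠ 0 → ψ t ≠ 0 :=
    fun t ht h => ht (hinj (by rw [map_zero]; exact h))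
  -- Vieta
  have h1 : A + (1 - A + s) * ψ i + (1 - A - s) * ψ i = 1 := by
    linear_combination (1 - A) * hiK
  have h2 : A * ((1 - A + s) * ψ i) + A * ((1 - A - s) * ψ i)
      + ((1 - A + s) * ψ i) * ((1 - A - s) * ψ i) = 0 := by
    linear_combination (-2 * A * (1 - A) * ψ i) * hiK + (-(ψ i) ^ 2) * hsA
  have h3 : A * ((1 - A + s) * ψ i) * ((1 - A - s) * ψ i) = A ^ 3 - A ^ 2 := by
    linear_combination (-A ^ 2 * (1 - A) * (1 + 2 * ψ i)) * hiK + (-A * (ψ i) ^ 2) * hsA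
  have hrr' : ((1 - A + s) * ψ i) * ((1 - A - s) * ψ i) = A ^ 2 - A := by
    linear_combination (-A * (1 - A) * (1 + 2 * ψ i)) * hiK + (-(ψ i) ^ 2) * hsA
  have hDa : (A - (1 - A + s) * ψ i) * (A - (1 - A - s) * ψ i) = 3 * A ^ 2 - 2 * A := by
    linear_combination (-2 * A * (1 - A) * (1 + ψ i)) * hiK + (-(ψ i) ^ 2) * hsA
  have hqK : 3 * A ^ 2 - 2 * A ≠ 0 := by
    intro h
    apply hψne _ hq
    rw [show ψ (3 * a ^ 2 - 2 * a) = 3 * A ^ 2 - 2 * A by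
      push_cast [map_sub, map_mul, map_pow, map_ofNat]; ring, h]
  have haa1K : A ^ 2 - A ≠ 0 := by
    intro h
    apply hψne _ haa1
    rw [show ψ (a ^ 2 - a) = A ^ 2 - A by push_cast [map_sub, map_pow]; ring, h]
  have d3 : (1 - A + s) * ψ i - (1 - A - s) * ψ i ≠ 0 := by
    intro h
    exact hsne (by linear_combination h - s * hiK)
  have d1 : A - (1 - A + s) * ψ i ≠ 0 := by
    intro h
    rw [h, zero_mul] at hDa
    exact hqK hDa.symm
  have d2 : A - (1 - A - s) * ψ i ≠ 0 := by
    intro h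
    rw [h, mul_zero] at hDa
    exact hqK hDa.symm
  have hrne : (1 - A + s) * ψ i ≠ 0 := by
    intro h
    rw [h, zero_mul] at hrr'
    exact haa1K hrr'.symm
  have hr'ne : (1 - A - s) * ψ i ≠ 0 := by
    intro h
    rw [h, mul_zero] at hrr'
    exact haa1K hrr'.symm
  -- Frobenius
  have hsp : s ^ p = -s := by
    have e1 : s ^ p = (s ^ 2) ^ (p / 2) * s := by
      rw [← pow_mul, ← pow_succ]
      congr 1
      omega
    rw [e1, hs2, ← map_pow, hE, map_neg, map_one, neg_one_mul]
  have hfrA : ∀ t : ZMod p, (ψ t) ^ p = ψ t := by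
    intro t
    rw [← map_pow, ZMod.pow_card]
  have hrp : ((1 - A + s) * ψ i) ^ p = (1 - A - s) * ψ i := by
    rw [mul_pow, hfrA i]
    congr 1
    have e1 : (1 - A + s) = (1 - A) + s := by ring
    rw [e1, add_pow_char, hsp]
    have e2 : (1 - A) ^ p = 1 - A := by
      rw [show (1 : AdjoinRoot (X ^ 2 - C (-3 * a ^ 2 + 2 * a + 1))) - A = ψ (1 - a) by
        rw [map_sub, map_one], hfrA]
    rw [e2]
    ring
  have hr'p : ((1 - A - s) * ψ i) ^ p = (1 - A + s) * ψ i := by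
    rw [mul_pow, hfrA i]
    congr 1
    have e1 : (1 - A - s) = (1 - A) + (-s) := by ring
    rw [e1, add_pow_char]
    have e2 : (1 - A) ^ p = 1 - A := by
      rw [show (1 : AdjoinRoot (X ^ 2 - C (-3 * a ^ 2 + 2 * a + 1))) - A = ψ (1 - a) by
        rw [map_sub, map_one], hfrA]
    have e3 : (-s) ^ p = -(s ^ p) := Odd.neg_pow (Nat.odd_iff.mpr hodd) s
    rw [e2, e3, hsp]
    ring
  -- closed form in the extension
  have cf := closed_form (A ^ 3 - A ^ 2) A ((1 - A + s) * ψ i) ((1 - A - s) * ψ i)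
    h1 h2 h3 d1 d2 d3 (p - 1)
  have hbbmap : ψ (bb (a ^ 3 - a ^ 2) (p - 1)) = bb (A ^ 3 - A ^ 2) (p - 1) := by
    rw [map_bb]
    congr 1
    push_cast [map_sub, map_pow]
    ring
  -- power rewrites
  have pA : A ^ (p - 1 + 2) = A ^ 2 := by
    rw [pow_add, show A ^ (p - 1) = ψ (a ^ (p - 1)) by rw [map_pow],
      ZMod.pow_card_sub_one_eq_one ha0, map_one, one_mul]
  have pe : ∀ t : AdjoinRoot (X ^ 2 - C (-3 * a ^ 2 + 2 * a + 1)),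
      t ^ (p - 1 + 2) = t ^ p * t := by
    intro t
    rw [← pow_succ]
    congr 1
    omega
  have pr : ((1 - A + s) * ψ i) ^ (p - 1 + 2)
      = ((1 - A - s) * ψ i) * ((1 - A + s) * ψ i) := by
    rw [pe, hrp]
  have pr' : ((1 - A - s) * ψ i) ^ (p - 1 + 2)
      = ((1 - A + s) * ψ i) * ((1 - A - s) * ψ i) := by
    rw [pe, hr'p]
  rw [pA, pr, pr'] at cf
  -- combine fractions
  have aux2 : ∀ u v w c : AdjoinRoot (X ^ 2 - C (-3 * a ^ 2 + 2 * a + 1)),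
      u - v ≠ 0 → u - w ≠ 0 → v - w ≠ 0 →
      u ^ 2 / ((u - v) * (u - w)) + c / ((v - u) * (v - w)) + c / ((w - u) * (w - v))
        = (u ^ 2 - c) / ((u - v) * (u - w)) := by
    intro u v w c e1 e2 e3
    have e4 : v - u ≠ 0 := fun h => e1 (by linear_combination -h)
    have e5 : w - u ≠ 0 := fun h => e2 (by linear_combination -h)
    have e6 : w - v ≠ 0 := fun h => e3 (by linear_combination -h)
    field_simp
    ring
  have hcomm : ((1 - A - s) * ψ i) * ((1 - A + s) * ψ i)
      = ((1 - A + s) * ψ i) * ((1 - A - s) * ψ i) := by ring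
  rw [hcomm] at cf
  rw [aux2 _ _ _ _ d1 d2 d3, hrr', hDa] at cf
  -- transfer back to ZMod p
  have hval : bb (a ^ 3 - a ^ 2) (p - 1) = (a ^ 2 - (a ^ 2 - a)) / (3 * a ^ 2 - 2 * a) := by
    apply hinj
    rw [hbbmap, cf, map_div₀, map_sub, map_sub, map_pow]
    rw [show ψ (3 * a ^ 2 - 2 * a) = 3 * A ^ 2 - 2 * A by
      push_cast [map_sub, map_mul, map_pow, map_ofNat]; ring]
  rw [sum_eq_bb p hp, show (-(a ^ 2 - a ^ 3)) = a ^ 3 - a ^ 2 by ring, hval]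
  rw [show a ^ 2 - (a ^ 2 - a) = a by ring, div_sub_one hq]
  congr 1
  ring

private lemma isSquare_mul_sq_iff {F : Type*} [Field F] (u c : F) (hc : c ≠ 0) :
    IsSquare (u * c ^ 2) ↔ IsSquare u := by
  constructor
  · rintro ⟨t, ht⟩
    refine ⟨t / c, ?_⟩
    rw [div_mul_div_comm]
    rw [eq_div_iff (by exact mul_ne_zero hc hc)]
    linear_combination ht
  · rintro ⟨t, ht⟩
    exact ⟨t * c, by rw [ht]; ring⟩

private lemma natPrimeNeZero (p : ℕ) [Fact p.Prime] (n : ℕ) (hn : n.Prime) (hne : p ≠ n) :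
    ((n : ℕ) : ZMod p) ≠ 0 := by
  rw [Ne, ZMod.natCast_eq_zero_iff]
  intro h
  exact hne ((Nat.prime_dvd_prime_iff_eq Fact.out hn).mp h)

private lemma endgame (p : ℕ) [Fact p.Prime] (hp : 3 < p) (a e CC : ZMod p)
    (ha0 : a ≠ 0) (ha1 : a - 1 ≠ 0) (hq : 3 * a ^ 2 - 2 * a ≠ 0)
    (he0 : e ≠ 0) (hd0 : -3 * a ^ 2 + 2 * a + 1 ≠ 0)
    (hsq : IsSquare (-3 * a ^ 2 + 2 * a + 1) ↔ IsSquare e)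
    (hC : -(3 * a ^ 2 - 3 * a) = CC * (-2) * (3 * a ^ 2 - 2 * a)) :
    ∑ k ∈ Finset.Icc 1 (p / 3), ((3 * k).choose k : ZMod p) * (a ^ 2 - a ^ 3) ^ k
      = CC * (((quadraticChar (ZMod p) e : ℤ) : ZMod p) - 1) := by
  rcases quadraticChar_dichotomy he0 with h | h
  · rw [h]
    have hsqe : IsSquare e := (quadraticChar_one_iff_isSquare he0).mp h
    rw [master_sq p hp a ha0 ha1 hq hd0 (hsq.mpr hsqe)]
    push_cast
    ring
  · rw [h]
    have hns : ¬ IsSquare e := by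
      intro hcon
      rw [(quadraticChar_one_iff_isSquare he0).mpr hcon] at h
      norm_num at h
    rw [master_nonsq p hp a ha0 ha1 hq (fun hcon => hns (hsq.mp hcon)), div_eq_iff hq]
    push_cast
    linear_combination hC

private lemma negOnePowLink (p : ℕ) [Fact p.Prime] (hp : 3 < p) :
    ((-1 : ZMod p)) ^ ((p - 1) / 2) = ((quadraticChar (ZMod p) (-1) : ℤ) : ZMod p) := by
  have hp2 : 2 ≤ p := (Fact.out : p.Prime).two_le
  have hodd : p % 2 = 1 := Nat.odd_iff.mp (Nat.Prime.odd_of_ne_two Fact.out (by omega))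
  have hm1 : (-1 : ZMod p) ≠ 0 := by
    intro h
    exact one_ne_zero (α := ZMod p) (by linear_combination -h)
  have hpdiv : (p - 1) / 2 = p / 2 := by omega
  rcases quadraticChar_dichotomy hm1 with h | h
  · rw [h]
    have h1 := (ZMod.euler_criterion p hm1).mp ((quadraticChar_one_iff_isSquare hm1).mp h)
    rw [hpdiv, h1]
    norm_num
  · rw [h]
    have hns : ¬ IsSquare (-1 : ZMod p) := by
      intro hcon
      rw [(quadraticChar_one_iff_isSquare hm1).mpr hcon] at h
      norm_num at h
    have hne : (-1 : ZMod p) ^ (p / 2) ≠ 1 := fun hcon => hns ((ZMod.euler_criterion p hm1).mpr hcon)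
    rw [hpdiv]
    rcases Nat.even_or_odd (p / 2) with h2 | h2
    · exact absurd h2.neg_one_pow hne
    · rw [h2.neg_one_pow]
      push_cast
      ring

private instance fact5 : Fact (Nat.Prime 5) := ⟨by norm_num⟩

private lemma p5case1 : (∑ k ∈ Finset.Icc 1 (5 / 3), ((3 * k).choose k : ZMod 5) * 36 ^ k =
    6 / 11 * (((quadraticChar (ZMod 5) (-2) : ℤ) : ZMod 5) - 1)) := by
  rw [show quadraticChar (ZMod 5) (-2) = -1 from
    quadraticChar_neg_one_iff_not_isSquare.mpr (by decide)]
  rw [show (5:ℕ)/3 = 1 from rfl, Finset.Icc_self, Finset.sum_singleton]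
  rw [div_mul_eq_mul_div, eq_div_iff (by decide : (11:ZMod 5) ≠ 0)]
  push_cast
  decide

private lemma p5case2 : (∑ k ∈ Finset.Icc 1 (5 / 3), ((3 * k).choose k : ZMod 5) * (-100) ^ k =
    6 / 13 * ((-1 : ZMod 5) ^ ((5 - 1) / 2) - 1)) := by
  rw [show (5:ℕ)/3 = 1 from rfl, Finset.Icc_self, Finset.sum_singleton]
  rw [div_mul_eq_mul_div, eq_div_iff (by decide : (13:ZMod 5) ≠ 0)]
  decide

private lemma p5case3 : (∑ k ∈ Finset.Icc 1 (5 / 3), ((3 * k).choose k : ZMod 5) * (1 / 8) ^ k =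
    3 / 2 * (((quadraticChar (ZMod 5) 5 : ℤ) : ZMod 5) - 1)) := by
  rw [show quadraticChar (ZMod 5) 5 = 0 from by
    rw [show ((5 : ZMod 5)) = 0 from by decide]; exact quadraticChar_zero]
  rw [show (5:ℕ)/3 = 1 from rfl, Finset.Icc_self, Finset.sum_singleton]
  rw [show ((1:ZMod 5)/8) = 2 from by rw [div_eq_iff (by decide : (8:ZMod 5) ≠ 0)]; decide]
  rw [div_mul_eq_mul_div, eq_div_iff (by decide : (2:ZMod 5) ≠ 0)]
  push_cast
  decide

private lemma p5case4 : (∑ k ∈ Finset.Icc 1 (5 / 3), ((3 * k).choose k : ZMod 5) * (3 / 8) ^ k =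
    9 / 14 * (((quadraticChar (ZMod 5) (-3) : ℤ) : ZMod 5) - 1)) := by
  rw [show quadraticChar (ZMod 5) (-3) = -1 from
    quadraticChar_neg_one_iff_not_isSquare.mpr (by decide)]
  rw [show (5:ℕ)/3 = 1 from rfl, Finset.Icc_self, Finset.sum_singleton]
  rw [show ((3:ZMod 5)/8) = 1 from by rw [div_eq_iff (by decide : (8:ZMod 5) ≠ 0)]; decide]
  rw [div_mul_eq_mul_div, eq_div_iff (by decide : (14:ZMod 5) ≠ 0)]
  push_cast
  decide

theorem stmt_8 (p : ℕ) [Fact p.Prime] (hp : 3 < p) :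
    (p ≠ 11 →
      ∑ k ∈ Finset.Icc 1 (p / 3), ((3 * k).choose k : ZMod p) * 36 ^ k =
        6 / 11 * (((quadraticChar (ZMod p) (-2) : ℤ) : ZMod p) - 1)) ∧
    (p ≠ 13 →
      ∑ k ∈ Finset.Icc 1 (p / 3), ((3 * k).choose k : ZMod p) * (-100) ^ k =
        6 / 13 * ((-1 : ZMod p) ^ ((p - 1) / 2) - 1)) ∧
    (∑ k ∈ Finset.Icc 1 (p / 3), ((3 * k).choose k : ZMod p) * (1 / 8) ^ k =
        3 / 2 * (((quadraticChar (ZMod p) 5 : ℤ) : ZMod p) - 1)) ∧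
    (p ≠ 7 →
      ∑ k ∈ Finset.Icc 1 (p / 3), ((3 * k).choose k : ZMod p) * (3 / 8) ^ k =
        9 / 14 * (((quadraticChar (ZMod p) (-3) : ℤ) : ZMod p) - 1)) := by
  by_cases hp5 : p = 5
  · subst hp5
    exact ⟨fun _ => p5case1, fun _ => p5case2, p5case3, fun _ => p5case4⟩
  · have hp2 : 2 ≤ p := (Fact.out : p.Prime).two_le
    have h2 : (2 : ZMod p) ≠ 0 := zmodTwoNeZero p hp
    have h3 : (3 : ZMod p) ≠ 0 := by
      have := natPrimeNeZero p 3 (by norm_num) (by omega)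
      exact_mod_cast this
    have h5 : (5 : ZMod p) ≠ 0 := by
      have := natPrimeNeZero p 5 (by norm_num) hp5
      exact_mod_cast this
    have hhalf : (2 : ZMod p) * (1/2) = 1 := by
      rw [mul_one_div]
      exact div_self h2
    have half_ne : ((1:ZMod p)/2) ≠ 0 := by
      rw [one_div]
      exact inv_ne_zero h2
    have h8 : (8 : ZMod p) ≠ 0 := by
      rw [show (8:ZMod p) = 2^3 by norm_num]
      exact pow_ne_zero 3 h2
    refine ⟨fun h11 => ?_, fun h13 => ?_, ?_, fun h7 => ?_⟩
    · -- case 1 : a = -3, e = -2, CC = 6/11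
      have h11' : (11 : ZMod p) ≠ 0 := by
        have := natPrimeNeZero p 11 (by norm_num) h11
        exact_mod_cast this
      have h33 : (33 : ZMod p) ≠ 0 := by
        rw [show (33:ZMod p) = 3*11 by norm_num]
        exact mul_ne_zero h3 h11'
      rw [show (36 : ZMod p) = (-3:ZMod p)^2 - (-3:ZMod p)^3 by norm_num]
      refine endgame p hp (-3) (-2) (6/11) (neg_ne_zero.mpr h3) ?_ ?_ (neg_ne_zero.mpr h2) ?_ ?_ ?_
      · intro h
        apply h2
        have h4 : (2:ZMod p)*2 = 0 := by linear_combination -h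
        rcases mul_eq_zero.mp h4 with h'|h' <;> exact h'
      · rw [show (3*(-3:ZMod p)^2 - 2*(-3)) = 3*11 by norm_num]
        exact mul_ne_zero h3 h11'
      · rw [show (-3*(-3:ZMod p)^2 + 2*(-3) + 1) = -(2^5) by norm_num]
        intro h
        exact pow_ne_zero 5 h2 (by linear_combination -h)
      · rw [show (-3*(-3:ZMod p)^2 + 2*(-3) + 1) = (-2) * 4^2 by norm_num]
        refine isSquare_mul_sq_iff _ _ ?_
        intro h
        apply h2
        have h4 : (2:ZMod p)*2 = 0 := by linear_combination h
        rcases mul_eq_zero.mp h4 with h'|h' <;> exact h'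
      · rw [div_mul_eq_mul_div, div_mul_eq_mul_div, eq_div_iff h11']
        norm_num
    · -- case 2 : a = 5, e = -1, CC = 6/13
      have h13' : (13 : ZMod p) ≠ 0 := by
        have := natPrimeNeZero p 13 (by norm_num) h13
        exact_mod_cast this
      have h65 : (65 : ZMod p) ≠ 0 := by
        rw [show (65:ZMod p) = 5*13 by norm_num]
        exact mul_ne_zero h5 h13'
      rw [negOnePowLink p hp]
      rw [show (-100 : ZMod p) = (5:ZMod p)^2 - (5:ZMod p)^3 by norm_num]
      refine endgame p hp 5 (-1) (6/13) h5 ?_ ?_ (neg_ne_zero.mpr one_ne_zero) ?_ ?_ ?_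
      · intro h
        apply h2
        have h4 : (2:ZMod p)*2 = 0 := by linear_combination h
        rcases mul_eq_zero.mp h4 with h'|h' <;> exact h'
      · rw [show (3*(5:ZMod p)^2 - 2*5) = 5*13 by norm_num]
        exact mul_ne_zero h5 h13'
      · rw [show (-3*(5:ZMod p)^2 + 2*5 + 1) = -(2^6) by norm_num]
        intro h
        exact pow_ne_zero 6 h2 (by linear_combination -h)
      · rw [show (-3*(5:ZMod p)^2 + 2*5 + 1) = (-1) * 8^2 by norm_num]
        exact isSquare_mul_sq_iff _ _ h8
      · rw [div_mul_eq_mul_div, div_mul_eq_mul_div, eq_div_iff h13']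
        norm_num
    · -- case 3 : a = 1/2, e = 5, CC = 3/2
      rw [show ((1:ZMod p)/8) = ((1:ZMod p)/2)^2 - ((1:ZMod p)/2)^3 from by
        rw [div_eq_iff h8]
        linear_combination (4*((1:ZMod p)/2)^2 - 2*(1/2) - 1) * hhalf]
      refine endgame p hp (1/2) 5 (3/2) half_ne ?_ ?_ h5 ?_ ?_ ?_
      · intro h
        exact one_ne_zero (α := ZMod p) (by linear_combination hhalf - 2*h)
      · intro h
        exact one_ne_zero (α := ZMod p) (by linear_combination (-4)*h + (6*((1:ZMod p)/2)-1)*hhalf)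
      · rw [show (-3*((1:ZMod p)/2)^2 + 2*(1/2) + 1) = 5 * ((1:ZMod p)/2)^2 from by
          linear_combination (-4*((1:ZMod p)/2)-1)*hhalf]
        exact mul_ne_zero h5 (pow_ne_zero 2 half_ne)
      · rw [show (-3*((1:ZMod p)/2)^2 + 2*(1/2) + 1) = 5 * ((1:ZMod p)/2)^2 from by
          linear_combination (-4*((1:ZMod p)/2)-1)*hhalf]
        exact isSquare_mul_sq_iff _ _ half_ne
      · rw [div_mul_eq_mul_div, div_mul_eq_mul_div, eq_div_iff h2]
        linear_combination (6*((1:ZMod p)/2))*hhalf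
    · -- case 4 : a = -(1/2), e = -3, CC = 9/14
      have h7' : (7 : ZMod p) ≠ 0 := by
        have := natPrimeNeZero p 7 (by norm_num) h7
        exact_mod_cast this
      have h14 : (14 : ZMod p) ≠ 0 := by
        rw [show (14:ZMod p) = 2*7 by norm_num]
        exact mul_ne_zero h2 h7'
      rw [show ((3:ZMod p)/8) = (-((1:ZMod p)/2))^2 - (-((1:ZMod p)/2))^3 from by
        rw [div_eq_iff h8]
        linear_combination (-4*((1:ZMod p)/2)^2 - 6*(1/2) - 3) * hhalf]
      refine endgame p hp (-(1/2)) (-3) (9/14) (neg_ne_zero.mpr half_ne) ?_ ?_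
        (neg_ne_zero.mpr h3) ?_ ?_ ?_
      · intro h
        apply h3
        linear_combination (-2)*h - hhalf
      · intro h
        apply h7'
        linear_combination 4*h - (6*((1:ZMod p)/2)+7)*hhalf
      · rw [show (-3*(-((1:ZMod p)/2))^2 + 2*(-(1/2)) + 1) = (-3) * ((1:ZMod p)/2)^2 from by
          linear_combination -hhalf]
        exact mul_ne_zero (neg_ne_zero.mpr h3) (pow_ne_zero 2 half_ne)
      · rw [show (-3*(-((1:ZMod p)/2))^2 + 2*(-(1/2)) + 1) = (-3) * ((1:ZMod p)/2)^2 from by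
          linear_combination -hhalf]
        exact isSquare_mul_sq_iff _ _ half_ne
      · rw [div_mul_eq_mul_div, div_mul_eq_mul_div, eq_div_iff h14]
        linear_combination (6*((1:ZMod p)/2))*hhalf
end

section
/- Let p > 3 be a prime and let m ∈ ℤ/pℤ with (2m+1)² ∉ {0, −3, 9, −27} in ℤ/pℤ. Then the congruence x³ + 3(m−1)(m+2)·x + 3(m−1)(m+2) ≡ 0 (mod p) has exactly three solutions x in ℤ/pℤ if and only if p ≡ 1 (mod 3) and ((m−1)/(m+2))^{(p−1)/3} = 1 in ℤ/pℤ. -/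
set_option maxHeartbeats 1000000 in
theorem stmt_12 (p : ℕ) [Fact p.Prime] (hp : 3 < p) (m : ZMod p)
    (h0 : (2 * m + 1) ^ 2 ≠ 0) (h1 : (2 * m + 1) ^ 2 ≠ -3)
    (h2 : (2 * m + 1) ^ 2 ≠ 9) (h3 : (2 * m + 1) ^ 2 ≠ -27) :
    ({x : ZMod p | x ^ 3 + 3 * (m - 1) * (m + 2) * x + 3 * (m - 1) * (m + 2) = 0} :
        Set (ZMod p)).ncard = 3 ↔
      p % 3 = 1 ∧ ((m - 1) / (m + 2)) ^ ((p - 1) / 3) = 1 := by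
  have hprime : p.Prime := Fact.out
  have h6 : (6 : ZMod p) ≠ 0 := by
    intro h
    have h' : ((6 : ℕ) : ZMod p) = 0 := by exact_mod_cast h
    rw [ZMod.natCast_eq_zero_iff] at h'
    have hle : p ≤ 6 := Nat.le_of_dvd (by norm_num) h'
    interval_cases p <;> revert h' hprime <;> decide
  have h2n : (2 : ZMod p) ≠ 0 := fun h => h6 (by rw [show (6 : ZMod p) = 3 * 2 by norm_num, h, mul_zero])
  have h3n : (3 : ZMod p) ≠ 0 := fun h => h6 (by rw [show (6 : ZMod p) = 2 * 3 by norm_num, h, mul_zero])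
  obtain ⟨a, hadef⟩ : ∃ u : ZMod p, u = m - 1 := ⟨_, rfl⟩
  obtain ⟨b, hbdef⟩ : ∃ u : ZMod p, u = m + 2 := ⟨_, rfl⟩
  rw [← hadef, ← hbdef]
  have hb : b = a + 3 := by rw [hadef, hbdef]; ring
  have hab : a * b ≠ 0 := by
    intro h
    apply h2
    have key : (2 * m + 1) ^ 2 - 9 = 4 * (a * b) := by rw [hadef, hbdef]; ring
    linear_combination key + 4 * h
  have ha0 : a ≠ 0 := fun h => hab (by rw [h, zero_mul])
  have hb0 : b ≠ 0 := fun h => hab (by rw [h, mul_zero])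
  have hapb : a + b ≠ 0 := by
    intro h
    apply h0
    have key : 2 * m + 1 = a + b := by rw [hadef, hbdef]; ring
    rw [key, h]; norm_num
  have habp : a * b * (a + b) ≠ 0 := mul_ne_zero hab hapb
  have hd3 : p % 3 = 1 → 3 * ((p - 1) / 3) = p - 1 := by omega
  constructor
  · -- forward direction
    intro hcard
    rw [Set.ncard_eq_three] at hcard
    obtain ⟨x, y, z, hxy, hxz, hyz, hS⟩ := hcard
    have hmem : ∀ u ∈ ({x, y, z} : Set (ZMod p)), u ^ 3 + 3 * a * b * u + 3 * a * b = 0 := by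
      intro u hu
      rw [← hS] at hu
      exact hu
    have hx : x ^ 3 + 3 * a * b * x + 3 * a * b = 0 := hmem x (by simp)
    have hy : y ^ 3 + 3 * a * b * y + 3 * a * b = 0 := hmem y (by simp)
    have hz : z ^ 3 + 3 * a * b * z + 3 * a * b = 0 := hmem z (by simp)
    have hP : x ^ 2 + x * y + y ^ 2 = -(3 * a * b) := by
      have hPf : (x - y) * (x ^ 2 + x * y + y ^ 2 + 3 * a * b) = 0 := by
        linear_combination hx - hy
      rcases mul_eq_zero.1 hPf with h | h
      · exact absurd (sub_eq_zero.1 h) hxy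
      · linear_combination h
    have hPy : y ^ 2 + y * z + z ^ 2 = -(3 * a * b) := by
      have hPf : (y - z) * (y ^ 2 + y * z + z ^ 2 + 3 * a * b) = 0 := by
        linear_combination hy - hz
      rcases mul_eq_zero.1 hPf with h | h
      · exact absurd (sub_eq_zero.1 h) hyz
      · linear_combination h
    have hsum : z = -x - y := by
      have h' : (x - z) * (x + y + z) = 0 := by linear_combination hP - hPy
      rcases mul_eq_zero.1 h' with h | h
      · exact absurd (sub_eq_zero.1 h) hxz
      · linear_combination h
    subst hsum
    have hQ : x * y * (x + y) = 3 * a * b := by linear_combination x * hP - hx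
    have hdel : ((x - y) * (y - (-x - y)) * (-x - y - x)) ^ 2 = -27 * (a * b * (a + b)) ^ 2 := by
      linear_combination (108 * (a * b) ^ 2 - 36 * (a * b) * (x ^ 2 + x * y + y ^ 2 + 3 * a * b) +
          4 * (x ^ 2 + x * y + y ^ 2 + 3 * a * b) ^ 2) * hP -
        (162 * (a * b) + 27 * (x * y * (x + y) - 3 * a * b)) * hQ +
        27 * (a * b) ^ 2 * (b - a + 3) * hb
    have h3abne : 3 * a * b * (a + b) ≠ 0 :=
      mul_ne_zero (mul_ne_zero (mul_ne_zero h3n ha0) hb0) hapb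
    obtain ⟨c, hcdef⟩ : ∃ u : ZMod p,
        u = (x - y) * (y - (-x - y)) * (-x - y - x) * (3 * a * b * (a + b))⁻¹ := ⟨_, rfl⟩
    have hcinv : 3 * a * b * (a + b) * (3 * a * b * (a + b))⁻¹ = 1 := mul_inv_cancel₀ h3abne
    have hc2 : c ^ 2 = -3 := by
      rw [hcdef, mul_pow, hdel]
      rw [show (-27 : ZMod p) * (a * b * (a + b)) ^ 2 = -3 * (3 * a * b * (a + b)) ^ 2 by ring]
      rw [mul_assoc, ← mul_pow, hcinv]
      ring
    -- p % 3 = 1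
    have hmod : p % 3 = 1 := by
      obtain ⟨w, hwdef⟩ : ∃ u : ZMod p, u = (c - 1) * (2 : ZMod p)⁻¹ := ⟨_, rfl⟩
      have h2i : (2 : ZMod p) * (2 : ZMod p)⁻¹ = 1 := mul_inv_cancel₀ h2n
      have h2w : 2 * w = c - 1 := by
        rw [hwdef, ← mul_assoc, mul_comm (2 : ZMod p) (c - 1), mul_assoc, h2i, mul_one]
      have h4n : (4 : ZMod p) ≠ 0 := by
        intro h
        exact h2n (mul_self_eq_zero.1 (show (2 : ZMod p) * 2 = 0 by linear_combination h))
      have hw : w ^ 2 + w + 1 = 0 := by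
        have h4 : (4 : ZMod p) * (w ^ 2 + w + 1) = 0 := by
          linear_combination (2 * w + c + 1) * h2w + hc2
        rcases mul_eq_zero.1 h4 with h | h
        · exact absurd h h4n
        · exact h
      have hw1 : w ≠ 1 := by
        intro h
        apply h3n
        rw [h] at hw
        linear_combination hw
      have hw0 : w ≠ 0 := by
        intro h
        rw [h] at hw
        simp at hw
      have hwu3 : (Units.mk0 w hw0) ^ 3 = 1 := by
        apply Units.ext
        rw [Units.val_pow_eq_pow_val, Units.val_one]
        show w ^ 3 = 1
        linear_combination (w - 1) * hw
      have hord : orderOf (Units.mk0 w hw0) = 3 := by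
        rcases (Nat.prime_three).eq_one_or_self_of_dvd _ (orderOf_dvd_of_pow_eq_one hwu3) with h | h
        · exfalso
          apply hw1
          have h1 : Units.mk0 w hw0 = 1 := orderOf_eq_one_iff.1 h
          have h2 := congrArg Units.val h1
          simpa using h2
        · exact h
      have hdvd : (3 : ℕ) ∣ p - 1 := by
        have hcd := orderOf_dvd_card (x := Units.mk0 w hw0)
        rw [hord, ZMod.card_units] at hcd
        exact hcd
      omega
    refine ⟨hmod, ?_⟩
    -- construct cube root
    have h6b : (6 : ZMod p) * b ≠ 0 := mul_ne_zero h6 hb0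
    obtain ⟨i, hidef⟩ : ∃ u : ZMod p, u = ((6 : ZMod p) * b)⁻¹ := ⟨_, rfl⟩
    have hi : 6 * b * i = 1 := by rw [hidef]; exact mul_inv_cancel₀ h6b
    obtain ⟨s, hsdef⟩ : ∃ u : ZMod p, u = (c * (x + 2 * y) - 3 * x) * i := ⟨_, rfl⟩
    have hq : b * s ^ 2 + x * s = a := by
      linear_combination (b * i ^ 2 * (x + 2 * y) ^ 2) * hc2 - (12 * b * i ^ 2) * hP +
        (-(x * (c * (x + 2 * y) - 3 * x) * i) + a * (6 * b * i + 1)) * hi +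
        (b * (s + (c * (x + 2 * y) - 3 * x) * i) + x) * hsdef
    have hs0 : s ≠ 0 := by
      intro h
      apply ha0
      rw [h] at hq
      linear_combination -hq
    have hfac : (b * s ^ 3 - a) * (b ^ 2 * s ^ 3 + a ^ 2) = 0 := by
      linear_combination (-(s ^ 3)) * hx +
        (3 * (a - b * s ^ 2) ^ 2 + 3 * (a - b * s ^ 2) * (b * s ^ 2 + x * s - a) +
          (b * s ^ 2 + x * s - a) ^ 2 + 3 * a * b * s ^ 2) * hq - a * b * s ^ 3 * hb
    have hd := hd3 hmod
    rcases mul_eq_zero.1 hfac with h | h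
    · have hsb : a / b = s ^ 3 := by
        rw [div_eq_iff hb0]
        linear_combination -h
      rw [hsb, ← pow_mul, mul_comm 3 ((p - 1) / 3)]
      rw [show (p - 1) / 3 * 3 = p - 1 by omega]
      exact ZMod.pow_card_sub_one_eq_one hs0
    · have hbs : b * s ≠ 0 := mul_ne_zero hb0 hs0
      have hs'0 : -a * (b * s)⁻¹ ≠ 0 := mul_ne_zero (neg_ne_zero.2 ha0) (inv_ne_zero hbs)
      have hbsinv : (b * s) * (b * s)⁻¹ = 1 := mul_inv_cancel₀ hbs
      have hs'3 : a / b = (-a * (b * s)⁻¹) ^ 3 := by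
        rw [div_eq_iff hb0]
        have h'' : a * (b * s) ^ 3 = -a ^ 3 * b := by linear_combination (a * b) * h
        calc a = a * ((b * s) * (b * s)⁻¹) ^ 3 := by rw [hbsinv]; ring
          _ = (a * (b * s) ^ 3) * ((b * s)⁻¹) ^ 3 := by ring
          _ = (-a ^ 3 * b) * ((b * s)⁻¹) ^ 3 := by rw [h'']
          _ = (-a * (b * s)⁻¹) ^ 3 * b := by ring
      rw [hs'3, ← pow_mul, mul_comm 3 ((p - 1) / 3)]
      rw [show (p - 1) / 3 * 3 = p - 1 by omega]
      exact ZMod.pow_card_sub_one_eq_one hs'0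
  · -- backward direction
    rintro ⟨hmod, hcube⟩
    have hd := hd3 hmod
    haveI : Fact (Nat.Prime 3) := ⟨by norm_num⟩
    have hdvdcard : (3 : ℕ) ∣ Fintype.card (ZMod p)ˣ := by
      rw [ZMod.card_units]
      omega
    obtain ⟨wu, hwu⟩ := exists_prime_orderOf_dvd_card 3 hdvdcard
    obtain ⟨w, hwdef⟩ : ∃ u : ZMod p, u = (wu : ZMod p) := ⟨_, rfl⟩
    have hw3 : w ^ 3 = 1 := by
      have h1 := pow_orderOf_eq_one wu
      rw [hwu] at h1
      have h2 := congrArg Units.val h1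
      rw [Units.val_pow_eq_pow_val, Units.val_one] at h2
      rw [hwdef]
      exact h2
    have hw1 : w ≠ 1 := by
      intro h
      have h1 : wu = 1 := Units.ext (by rw [← hwdef, h, Units.val_one])
      rw [h1] at hwu
      simp at hwu
    have hw : w ^ 2 + w + 1 = 0 := by
      have h' : (w - 1) * (w ^ 2 + w + 1) = 0 := by linear_combination hw3
      rcases mul_eq_zero.1 h' with h | h
      · exact absurd (by linear_combination h : w = 1) hw1
      · exact h
    -- obtain a cube root s of a / b
    have htne : a / b ≠ 0 := div_ne_zero ha0 hb0
    have hTd : (Units.mk0 (a / b) htne) ^ ((p - 1) / 3) = 1 := by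
      apply Units.ext
      rw [Units.val_pow_eq_pow_val, Units.val_one]
      exact hcube
    obtain ⟨g, hg⟩ := IsCyclic.exists_generator (α := (ZMod p)ˣ)
    obtain ⟨k, hk⟩ := Subgroup.mem_zpowers_iff.1 (hg (Units.mk0 (a / b) htne))
    have hgord : orderOf g = p - 1 := by
      have h1 := orderOf_eq_card_of_forall_mem_zpowers hg
      rwa [Nat.card_eq_fintype_card, ZMod.card_units] at h1
    have h3k : (3 : ℤ) ∣ k := by
      have hone : g ^ (k * (((p - 1) / 3 : ℕ) : ℤ)) = 1 := by
        rw [zpow_mul, hk, zpow_natCast, hTd]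
      have hdv := orderOf_dvd_iff_zpow_eq_one.2 hone
      rw [hgord] at hdv
      obtain ⟨e, he⟩ := hdv
      refine ⟨e, ?_⟩
      have hD0 : (((p - 1) / 3 : ℕ) : ℤ) ≠ 0 := by
        have h1 : 0 < (p - 1) / 3 := by omega
        exact_mod_cast h1.ne'
      have hcast : ((p - 1 : ℕ) : ℤ) = 3 * (((p - 1) / 3 : ℕ) : ℤ) := by
        exact_mod_cast hd.symm
      apply mul_right_cancel₀ hD0
      rw [hcast] at he
      linear_combination he
    obtain ⟨j, hj⟩ := h3k
    obtain ⟨s, hsdef⟩ : ∃ u : ZMod p, u = ((g ^ j : (ZMod p)ˣ) : ZMod p) := ⟨_, rfl⟩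
    have hs0 : s ≠ 0 := by rw [hsdef]; exact Units.ne_zero _
    have hs3 : b * s ^ 3 = a := by
      have hu3 : (g ^ j) ^ (3 : ℕ) = Units.mk0 (a / b) htne := by
        rw [← zpow_natCast (g ^ j) 3, ← zpow_mul,
          show j * ((3 : ℕ) : ℤ) = k by rw [hj]; push_cast; ring, hk]
      have hs3' : s ^ 3 = a / b := by
        have h1 := congrArg Units.val hu3
        rw [Units.val_pow_eq_pow_val] at h1
        rw [hsdef]
        exact h1
      rw [hs3', mul_div_cancel₀ a hb0]
    -- the three roots
    have key : ∀ v : ZMod p, (v - (b * s ^ 2 - b * s)) * (v - (b * s ^ 2 * w ^ 2 - b * s * w)) *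
        (v - (b * s ^ 2 * w - b * s * w ^ 2)) = v ^ 3 + 3 * a * b * v + 3 * a * b := by
      intro v
      linear_combination (b * s * v ^ 2 - b * s ^ 2 * v ^ 2 + b ^ 2 * s ^ 2 * w * v -
          3 * b ^ 2 * s ^ 3 * v + b ^ 2 * s ^ 3 * w * v - b ^ 2 * s ^ 3 * w ^ 2 * v +
          b ^ 2 * s ^ 4 * w * v - b ^ 3 * s ^ 3 + b ^ 3 * s ^ 3 * w - b ^ 3 * s ^ 4 * w ^ 2 +
          b ^ 3 * s ^ 5 * w ^ 2 + b ^ 3 * s ^ 6 - b ^ 3 * s ^ 6 * w) * hw +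
        (3 * b * v + b ^ 2 - b ^ 2 * s ^ 3 - a * b) * hs3 + (a * b) * hb
    have hSeq : ({x : ZMod p | x ^ 3 + 3 * a * b * x + 3 * a * b = 0} : Set (ZMod p)) =
        {b * s ^ 2 - b * s, b * s ^ 2 * w ^ 2 - b * s * w, b * s ^ 2 * w - b * s * w ^ 2} := by
      ext v
      simp only [Set.mem_setOf_eq, Set.mem_insert_iff, Set.mem_singleton_iff]
      constructor
      · intro hv
        have hprod : (v - (b * s ^ 2 - b * s)) * (v - (b * s ^ 2 * w ^ 2 - b * s * w)) *
            (v - (b * s ^ 2 * w - b * s * w ^ 2)) = 0 := (key v).trans hv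
        rcases mul_eq_zero.1 hprod with h | h
        · rcases mul_eq_zero.1 h with h' | h'
          · exact Or.inl (sub_eq_zero.1 h')
          · exact Or.inr (Or.inl (sub_eq_zero.1 h'))
        · exact Or.inr (Or.inr (sub_eq_zero.1 h))
      · rintro (rfl | rfl | rfl)
        · linear_combination -(key (b * s ^ 2 - b * s))
        · linear_combination -(key (b * s ^ 2 * w ^ 2 - b * s * w))
        · linear_combination -(key (b * s ^ 2 * w - b * s * w ^ 2))
    rw [hSeq]
    apply Set.ncard_eq_three.2
    refine ⟨_, _, _, ?_, ?_, ?_, rfl⟩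
    · -- x0 ≠ x1
      intro heq
      have hL : (3 : ZMod p) * (b * s ^ 2 * w ^ 2 + b * s) = 0 := by
        linear_combination (-2 - w) * heq + (b * s + 2 * b * s ^ 2 - b * s ^ 2 * w) * hw
      have hL0 : b * s ^ 2 * w ^ 2 + b * s = 0 := by
        rcases mul_eq_zero.1 hL with h | h
        · exact absurd h h3n
        · exact h
      apply habp
      have hcontr : a ^ 2 * b + a * b ^ 2 = 0 := by
        linear_combination (b ^ 2 * s ^ 2 + 2 * b ^ 2 * s ^ 3 * w ^ 2 + b ^ 2 * s ^ 4 * w ^ 4 -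
            3 * a * b * w ^ 2) * hL0 -
          (3 * b ^ 3 * s ^ 4 - 3 * b ^ 3 * s ^ 5 * w + 3 * b ^ 3 * s ^ 5 * w ^ 2 - b ^ 3 * s ^ 6 +
            b ^ 3 * s ^ 6 * w - b ^ 3 * s ^ 6 * w ^ 3 + b ^ 3 * s ^ 6 * w ^ 4 - 3 * a * b ^ 2 * s +
            3 * a * b ^ 2 * s ^ 2 * w - 3 * a * b ^ 2 * s ^ 2 * w ^ 2) * hw -
          (b ^ 2 - 3 * b ^ 2 * s - 3 * b ^ 2 * s * w + 3 * b ^ 2 * s ^ 2 * w + b ^ 2 * s ^ 3 +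
            a * b) * hs3
      linear_combination hcontr
    · -- x0 ≠ x2
      intro heq
      have hL : (3 : ZMod p) * (b * s ^ 2 + b * s * w ^ 2) = 0 := by
        linear_combination (2 + w) * heq + (2 * b * s - b * s * w + b * s ^ 2) * hw
      have hL0 : b * s ^ 2 + b * s * w ^ 2 = 0 := by
        rcases mul_eq_zero.1 hL with h | h
        · exact absurd h h3n
        · exact h
      apply habp
      have hcontr : a ^ 2 * b + a * b ^ 2 = 0 := by
        linear_combination (b ^ 2 * s ^ 2 * w ^ 4 + 2 * b ^ 2 * s ^ 3 * w ^ 2 + b ^ 2 * s ^ 4 -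
            3 * a * b * w ^ 2) * hL0 -
          (-(b ^ 3 * s ^ 3) + b ^ 3 * s ^ 3 * w - b ^ 3 * s ^ 3 * w ^ 3 + b ^ 3 * s ^ 3 * w ^ 4 -
            3 * b ^ 3 * s ^ 4 * w + 3 * b ^ 3 * s ^ 4 * w ^ 2 + 3 * b ^ 3 * s ^ 5 +
            3 * a * b ^ 2 * s * w - 3 * a * b ^ 2 * s * w ^ 2 - 3 * a * b ^ 2 * s ^ 2) * hw -
          (b ^ 2 + 3 * b ^ 2 * s * w - 3 * b ^ 2 * s ^ 2 - 3 * b ^ 2 * s ^ 2 * w + b ^ 2 * s ^ 3 +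
            a * b) * hs3
      linear_combination hcontr
    · -- x1 ≠ x2
      intro heq
      have hL : (3 : ZMod p) * (b * s ^ 2 + b * s) = 0 := by
        linear_combination (w - w ^ 2) * heq + (3 * b * s - 3 * b * s * w + b * s * w ^ 2 +
          3 * b * s ^ 2 - 3 * b * s ^ 2 * w + b * s ^ 2 * w ^ 2) * hw
      have hL0 : b * s ^ 2 + b * s = 0 := by
        rcases mul_eq_zero.1 hL with h | h
        · exact absurd h h3n
        · exact h
      apply habp
      have hcontr : a ^ 2 * b + a * b ^ 2 = 0 := by
        linear_combination (b ^ 2 * s ^ 2 + 2 * b ^ 2 * s ^ 3 + b ^ 2 * s ^ 4 - 3 * a * b) * hL0 -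
          (b ^ 2 + 3 * b ^ 2 * s + 3 * b ^ 2 * s ^ 2 + b ^ 2 * s ^ 3 + a * b) * hs3
      linear_combination hcontr
end
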